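/- Let f : ℕ → (0,∞) be a function such that both f and n ↦ 1/f(n) are weakly super-multiplicative, and suppose f has a normal order g, where g : (0,∞) → (0,∞) is strictly positive and log-uniformly continuous. Then there exists a real constant c such that f(n) = n^c holds for all n ∈ ℕ. -/

import Mathlib

/-- The upper density of a set of natural numbers:
`limsup_{N→∞} #{n ∈ S : n ≤ N} / N`. -/
noncomputable def upperDensity (S : Set ℕ) : ℝ :=
  Filter.limsup (fun N : ℕ => (({n | n ∈ S ∧ n ≤ N} : Set ℕ).ncard : ℝ) / N) Filter.atTop

/-- `f` is weakly super-multiplicative: for every `n` and `ε > 0` there exist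
`x₀ > 0` and `δ > 0` such that for all `x > x₀` the number of integers
`m ∈ [x, (1+ε)x]` with `f(nm) ≥ (1-ε) f(n) f(m)` is at least `δ x`. -/
def WeaklySuperMult (f : ℕ → ℝ) : Prop :=
  ∀ n : ℕ, 0 < n → ∀ ε : ℝ, 0 < ε → ∃ x₀ : ℝ, 0 < x₀ ∧ ∃ δ : ℝ, 0 < δ ∧
    ∀ x : ℝ, x₀ < x →
      δ * x ≤
        (({m : ℕ | (x ≤ (m : ℝ) ∧ (m : ℝ) ≤ (1 + ε) * x) ∧
            (1 - ε) * f n * f m ≤ f (n * m)} : Set ℕ).ncard : ℝ)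

/-- `f` has normal order `g`: for every `ε > 0` the set
`{n : |f(n) - g(n)| ≥ ε g(n)}` has upper density `0`. -/
def HasNormalOrder (f : ℕ → ℝ) (g : ℝ → ℝ) : Prop :=
  ∀ ε : ℝ, 0 < ε → upperDensity {n : ℕ | ε * g n ≤ |f n - g n|} = 0

/-- `g` is log-uniformly continuous: for every `ε > 0` there is `δ > 0` such that
`|x/y - 1| < δ` implies `|g(x)/g(y) - 1| < ε` for positive `x, y`. -/
def LogUniformlyContinuous (g : ℝ → ℝ) : Prop :=
  ∀ ε : ℝ, 0 < ε → ∃ δ : ℝ, 0 < δ ∧ ∀ x y : ℝ, 0 < x → 0 < y →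
    |x / y - 1| < δ → |g x / g y - 1| < ε

set_option maxHeartbeats 1000000

open Filter

lemma count_le (S : Set ℕ) (N : ℕ) :
    ({n | n ∈ S ∧ n ≤ N} : Set ℕ).ncard ≤ N + 1 := by
  have hsub : ({n | n ∈ S ∧ n ≤ N} : Set ℕ) ⊆ ↑(Finset.range (N+1)) := by
    intro m hm
    obtain ⟨_, h2⟩ := hm
    simp only [Finset.coe_range, Set.mem_Iio]
    omega
  calc ({n | n ∈ S ∧ n ≤ N} : Set ℕ).ncard
      ≤ (↑(Finset.range (N+1)) : Set ℕ).ncard :=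
        Set.ncard_le_ncard hsub (Finset.range (N+1)).finite_toSet
    _ = N + 1 := by rw [Set.ncard_coe_finset, Finset.card_range]

lemma count_finite (S : Set ℕ) (N : ℕ) : ({n | n ∈ S ∧ n ≤ N} : Set ℕ).Finite := by
  apply Set.Finite.subset (Finset.range (N+1)).finite_toSet
  intro m hm
  obtain ⟨_, h2⟩ := hm
  simp only [Finset.coe_range, Set.mem_Iio]
  omega

lemma density_count (S : Set ℕ) (h : upperDensity S = 0) (η : ℝ) (hη : 0 < η) :
    ∀ᶠ N : ℕ in atTop, (({n | n ∈ S ∧ n ≤ N} : Set ℕ).ncard : ℝ) < η * N := by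
  have hb : IsBoundedUnder (· ≤ ·) atTop
      (fun N : ℕ => (({n | n ∈ S ∧ n ≤ N} : Set ℕ).ncard : ℝ) / N) := by
    refine isBoundedUnder_of ⟨2, fun N => ?_⟩
    rcases Nat.eq_zero_or_pos N with h0 | h0
    · simp [h0]
    · rw [div_le_iff₀ (by exact_mod_cast h0)]
      have := count_le S N
      have : (({n | n ∈ S ∧ n ≤ N} : Set ℕ).ncard : ℝ) ≤ N + 1 := by exact_mod_cast this
      have hN : (1:ℝ) ≤ N := by exact_mod_cast h0
      linarith
  have hlt : Filter.limsup (fun N : ℕ => (({n | n ∈ S ∧ n ≤ N} : Set ℕ).ncard : ℝ) / N)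
      atTop < η := by rw [upperDensity] at h; rw [h]; exact hη
  have := eventually_lt_of_limsup_lt hlt hb
  filter_upwards [this, eventually_ge_atTop 1] with N hN hN1
  have hNpos : (0:ℝ) < N := by exact_mod_cast hN1
  rw [div_lt_iff₀ hNpos] at hN
  linarith

lemma window_bad (S : Set ℕ) (hS : upperDensity S = 0) (n : ℕ) (hn : 0 < n)
    (ε η : ℝ) (hε : 0 < ε) (hη : 0 < η) :
    ∀ᶠ x : ℝ in atTop,
      (({m : ℕ | (x ≤ (m : ℝ) ∧ (m : ℝ) ≤ (1 + ε) * x) ∧ (m ∈ S ∨ n * m ∈ S)} : Set ℕ).ncard : ℝ)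
        < η * x := by
  have hnR : (1:ℝ) ≤ n := by exact_mod_cast hn
  set η' : ℝ := η / (4 * n * (1 + ε) + 1) with hη'def
  have hη' : 0 < η' := by
    apply div_pos hη
    nlinarith
  obtain ⟨N₀, hN₀⟩ := (density_count S hS η' hη').exists_forall_of_atTop
  filter_upwards [eventually_ge_atTop (max (N₀ : ℝ) 1)] with x hx
  have hx1 : (1:ℝ) ≤ x := le_trans (le_max_right _ _) hx
  have hxN₀ : (N₀ : ℝ) ≤ x := le_trans (le_max_left _ _) hx
  set N : ℕ := ⌈(n : ℝ) * (1 + ε) * x⌉₊ with hNdef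
  have hxpos : (0:ℝ) < x := by linarith
  have h12 : (1:ℝ) ≤ (n : ℝ) * (1 + ε) := by nlinarith
  have hprod : (1:ℝ) ≤ (n : ℝ) * (1 + ε) * x := by
    have := mul_le_mul h12 hx1 zero_le_one (le_trans zero_le_one h12)
    linarith
  have hxle : x ≤ (n : ℝ) * (1 + ε) * x := by
    nlinarith [mul_nonneg (by linarith : (0:ℝ) ≤ (n : ℝ) * (1 + ε) - 1) hxpos.le]
  have hNge : (n : ℝ) * (1 + ε) * x ≤ N := Nat.le_ceil _
  have hNlt : (N : ℝ) < (n : ℝ) * (1 + ε) * x + 1 := Nat.ceil_lt_add_one (by linarith)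
  have hN0 : N₀ ≤ N := by
    have : (N₀ : ℝ) ≤ (N : ℝ) := by linarith
    exact_mod_cast this
  have hT := hN₀ N hN0
  set T : Set ℕ := {k | k ∈ S ∧ k ≤ N} with hTdef
  have hTfin : T.Finite := count_finite S N
  set B : Set ℕ :=
    {m : ℕ | (x ≤ (m : ℝ) ∧ (m : ℝ) ≤ (1 + ε) * x) ∧ (m ∈ S ∨ n * m ∈ S)} with hBdef
  set P : Set ℕ := (fun m => n * m) ⁻¹' T with hPdef
  have hinj : Function.Injective (fun m : ℕ => n * m) := mul_right_injective₀ hn.ne'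
  have hPfin : P.Finite := hTfin.preimage (hinj.injOn)
  have hsub : B ⊆ T ∪ P := by
    intro m hm
    obtain ⟨⟨hm1, hm2⟩, hm3⟩ := hm
    have hmN : m ≤ N := by
      have : (m : ℝ) ≤ (N : ℝ) := by nlinarith
      exact_mod_cast this
    rcases hm3 with h | h
    · exact Or.inl ⟨h, hmN⟩
    · refine Or.inr ?_
      refine ⟨h, ?_⟩
      have : ((n * m : ℕ) : ℝ) ≤ (N : ℝ) := by push_cast; nlinarith
      exact_mod_cast this
  have hPcard : P.ncard ≤ T.ncard := by
    have himg : (fun m : ℕ => n * m) '' P ⊆ T := Set.image_preimage_subset _ _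
    calc P.ncard = ((fun m : ℕ => n * m) '' P).ncard :=
          (Set.ncard_image_of_injective P hinj).symm
      _ ≤ T.ncard := Set.ncard_le_ncard himg hTfin
  have hBcard : (B.ncard : ℝ) ≤ 2 * T.ncard := by
    have h1 : B.ncard ≤ (T ∪ P).ncard :=
      Set.ncard_le_ncard hsub (hTfin.union hPfin)
    have h2 : (T ∪ P).ncard ≤ T.ncard + P.ncard := Set.ncard_union_le T P
    have : B.ncard ≤ 2 * T.ncard := by omega
    exact_mod_cast this
  have hNpos : (0:ℝ) < N := by linarith
  have : (T.ncard : ℝ) < η' * N := hT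
  have hfin : (B.ncard : ℝ) < 2 * η' * N := by nlinarith
  have hbound : 2 * η' * (N : ℝ) < η * x := by
    have hN2 : (N : ℝ) ≤ 2 * ((n : ℝ) * (1 + ε) * x) := by nlinarith
    have hstep : 2 * η' * (N : ℝ) ≤ 4 * η' * ((n : ℝ) * (1 + ε) * x) := by nlinarith
    have : η' * (4 * n * (1 + ε) + 1) = η := by
      rw [hη'def]; exact div_mul_cancel₀ η (by nlinarith : (0:ℝ) < 4 * n * (1 + ε) + 1).ne'
    nlinarith
  linarith

lemma arith_c1 (ε₁ ε₂ : ℝ) (h1 : 0 < ε₂) (h2 : ε₂ ≤ ε₁) (h3 : ε₁ ≤ 1/20) :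
    (1-ε₁)^3 ≤ (1-ε₂)^2*(1-ε₁) := by
  nlinarith [mul_nonneg (mul_nonneg (show (0:ℝ) ≤ 1-ε₁ by linarith)
    (show (0:ℝ) ≤ ε₁-ε₂ by linarith)) (show (0:ℝ) ≤ 2-ε₁-ε₂ by linarith)]

lemma arith_c2 (ε₁ ε₂ : ℝ) (h1 : 0 < ε₂) (h2 : ε₂ ≤ ε₁) :
    (1+ε₂)*(1+ε₁) ≤ (1+ε₁)^2 := by nlinarith

lemma arith_c3 (ε₁ : ℝ) (h1 : 0 < ε₁) (h3 : ε₁ ≤ 1/20) :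
    (1+ε₁)^2 ≤ (1+20*ε₁)*(1-ε₁)^3 := by
  nlinarith [mul_nonneg (sq_nonneg ε₁) (show (0:ℝ) ≤ 59 - 20*ε₁ by linarith),
    mul_pos h1 h1, mul_nonneg (mul_nonneg h1.le h1.le) h1.le]

lemma arith_c4 (ε₁ : ℝ) (h1 : 0 < ε₁) (h3 : ε₁ ≤ 1/20) :
    (1-20*ε₁)*(1+ε₁)^2 ≤ (1-ε₁)^3 := by
  nlinarith [sq_nonneg ε₁, mul_pos h1 h1, mul_nonneg (mul_nonneg h1.le h1.le) h1.le]

lemma arith_up (ε₁ ε₂ ε A B : ℝ) (h1 : 0 < ε₂) (h2 : ε₂ ≤ ε₁) (h3 : ε₁ ≤ 1/20)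
    (h4 : 20*ε₁ ≤ ε) (hA : 0 < A) (hB : 0 < B)
    (h : (1-ε₂)^2*(1-ε₁)*A ≤ (1+ε₂)*(1+ε₁)*B) : A ≤ (1+ε)*B := by
  have hp : (0:ℝ) < (1-ε₁)^3 := pow_pos (by linarith) 3
  have step : (1-ε₁)^3*A ≤ (1+ε₁)^2*B :=
    le_trans (mul_le_mul_of_nonneg_right (arith_c1 ε₁ ε₂ h1 h2 h3) hA.le)
      (le_trans h (mul_le_mul_of_nonneg_right (arith_c2 ε₁ ε₂ h1 h2) hB.le))
  have step2 : (1-ε₁)^3*A ≤ (1-ε₁)^3*((1+20*ε₁)*B) := by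
    have := mul_le_mul_of_nonneg_right (arith_c3 ε₁ (lt_of_lt_of_le h1 h2) h3) hB.le
    nlinarith
  have h5 : A ≤ (1+20*ε₁)*B := le_of_mul_le_mul_left (by linarith [step2]) hp
  nlinarith

lemma arith_lo (ε₁ ε₂ ε A B : ℝ) (h1 : 0 < ε₂) (h2 : ε₂ ≤ ε₁) (h3 : ε₁ ≤ 1/20)
    (h4 : 20*ε₁ ≤ ε) (hA : 0 < A) (hB : 0 < B)
    (h : (1-ε₂)^2*(1-ε₁)*B ≤ (1+ε₂)*(1+ε₁)*A) : (1-ε)*B ≤ A := by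
  rcases le_or_gt 1 ε with hε1 | hε1
  · nlinarith
  · have hp : (0:ℝ) < (1+ε₁)^2 := pow_pos (by linarith) 2
    have step : (1-ε₁)^3*B ≤ (1+ε₁)^2*A :=
      le_trans (mul_le_mul_of_nonneg_right (arith_c1 ε₁ ε₂ h1 h2 h3) hB.le)
        (le_trans h (mul_le_mul_of_nonneg_right (arith_c2 ε₁ ε₂ h1 h2) hA.le))
    have step2 : (1+ε₁)^2*((1-ε)*B) ≤ (1+ε₁)^2*A := by
      have hc : (1-ε)*(1+ε₁)^2 ≤ (1-20*ε₁)*(1+ε₁)^2 := by nlinarith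
      have := arith_c4 ε₁ (lt_of_lt_of_le h1 h2) h3
      nlinarith
    exact le_of_mul_le_mul_left step2 hp

lemma finite_of_bdd (y : ℝ) (Q : ℕ → Prop) (h : ∀ m, Q m → (m:ℝ) ≤ y) :
    {m : ℕ | Q m}.Finite := by
  apply Set.Finite.subset (Set.finite_Iic ⌈y⌉₊)
  intro m hm
  have h1 : (m:ℝ) ≤ y := h m hm
  have h2 : (m:ℝ) ≤ (⌈y⌉₊ : ℝ) := le_trans h1 (Nat.le_ceil y)
  exact_mod_cast h2

lemma key (f : ℕ → ℝ) (g : ℝ → ℝ)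
    (hfpos : ∀ n, 0 < f n)
    (hwsm : ∀ n : ℕ, 0 < n → ∀ ε : ℝ, 0 < ε → ∃ x₀ : ℝ, 0 < x₀ ∧ ∃ δ : ℝ, 0 < δ ∧
      ∀ x : ℝ, x₀ < x →
        δ * x ≤
          (({m : ℕ | (x ≤ (m : ℝ) ∧ (m : ℝ) ≤ (1 + ε) * x) ∧
              (1 - ε) * f n * f m ≤ f (n * m)} : Set ℕ).ncard : ℝ))
    (hwsm' : ∀ n : ℕ, 0 < n → ∀ ε : ℝ, 0 < ε → ∃ x₀ : ℝ, 0 < x₀ ∧ ∃ δ : ℝ, 0 < δ ∧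
      ∀ x : ℝ, x₀ < x →
        δ * x ≤
          (({m : ℕ | (x ≤ (m : ℝ) ∧ (m : ℝ) ≤ (1 + ε) * x) ∧
              (1 - ε) * (1 / f n) * (1 / f m) ≤ 1 / f (n * m)} : Set ℕ).ncard : ℝ))
    (hgpos : ∀ x : ℝ, 0 < x → 0 < g x)
    (hgluc : ∀ ε : ℝ, 0 < ε → ∃ δ : ℝ, 0 < δ ∧ ∀ x y : ℝ, 0 < x → 0 < y →
      |x / y - 1| < δ → |g x / g y - 1| < ε)
    (hno : ∀ ε : ℝ, 0 < ε → upperDensity {n : ℕ | ε * g n ≤ |f n - g n|} = 0)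
    (n : ℕ) (hn : 0 < n) (ε : ℝ) (hε : 0 < ε) :
    ∀ᶠ x : ℝ in atTop,
      (1 - ε) * g ((n:ℝ) * x) ≤ f n * g x ∧ f n * g x ≤ (1 + ε) * g ((n:ℝ) * x) := by
  have hnR : (1:ℝ) ≤ n := by exact_mod_cast hn
  set ε₁ : ℝ := min ε 1 / 20 with hε₁def
  have hε₁ : 0 < ε₁ := by
    have : 0 < min ε 1 := lt_min hε one_pos
    positivity
  have hε₁ε : 20 * ε₁ ≤ ε := by
    have : min ε 1 ≤ ε := min_le_left _ _
    rw [hε₁def]; linarith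
  have hε₁1 : ε₁ ≤ 1/20 := by
    have : min ε 1 ≤ 1 := min_le_right _ _
    rw [hε₁def]; linarith
  obtain ⟨δL, hδL, hLUC⟩ := hgluc ε₁ hε₁
  set ε₂ : ℝ := min ε₁ (δL/2) with hε₂def
  have hε₂ : 0 < ε₂ := lt_min hε₁ (by linarith)
  have hε₂ε₁ : ε₂ ≤ ε₁ := min_le_left _ _
  have hε₂δL : ε₂ < δL := lt_of_le_of_lt (min_le_right _ _) (by linarith)
  obtain ⟨x₀, hx₀, δ, hδ, hA⟩ := hwsm n hn ε₂ hε₂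
  obtain ⟨x₀', hx₀', δ', hδ', hB⟩ := hwsm' n hn ε₂ hε₂
  set S : Set ℕ := {m : ℕ | ε₂ * g m ≤ |f m - g m|} with hSdef
  have hS : upperDensity S = 0 := hno ε₂ hε₂
  have hbad := window_bad S hS n hn ε₂ (min δ δ') hε₂ (lt_min hδ hδ')
  filter_upwards [hbad, eventually_gt_atTop x₀, eventually_gt_atTop x₀',
    eventually_gt_atTop 1] with x hbadx hxx₀ hxx₀' hx1
  have hxpos : (0:ℝ) < x := by linarith
  have hgx : 0 < g x := hgpos x hxpos
  have hnx : (0:ℝ) < (n:ℝ) * x := mul_pos (by linarith) hxpos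
  have hgnx : 0 < g ((n:ℝ) * x) := hgpos _ hnx
  -- the bad set
  set Bad : Set ℕ :=
    {m : ℕ | (x ≤ (m : ℝ) ∧ (m : ℝ) ≤ (1 + ε₂) * x) ∧ (m ∈ S ∨ n * m ∈ S)} with hBaddef
  have hBadFin : Bad.Finite := by
    apply finite_of_bdd ((1+ε₂)*x)
    rintro m ⟨⟨-, h2⟩, -⟩
    exact h2
  -- extract good m for the upper bound
  have hexU : ∃ m : ℕ, ((x ≤ (m : ℝ) ∧ (m : ℝ) ≤ (1 + ε₂) * x) ∧
      (1 - ε₂) * f n * f m ≤ f (n * m)) ∧ m ∉ S ∧ n * m ∉ S := by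
    by_contra hcon
    push_neg at hcon
    have hsub : {m : ℕ | (x ≤ (m : ℝ) ∧ (m : ℝ) ≤ (1 + ε₂) * x) ∧
        (1 - ε₂) * f n * f m ≤ f (n * m)} ⊆ Bad := by
      intro m hm
      refine ⟨hm.1, ?_⟩
      by_cases hmS : m ∈ S
      · exact Or.inl hmS
      · exact Or.inr (hcon m hm hmS)
    have hc1 := hA x hxx₀
    have hc2 : ({m : ℕ | (x ≤ (m : ℝ) ∧ (m : ℝ) ≤ (1 + ε₂) * x) ∧
        (1 - ε₂) * f n * f m ≤ f (n * m)} : Set ℕ).ncard ≤ Bad.ncard :=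
      Set.ncard_le_ncard hsub hBadFin
    have : (Bad.ncard : ℝ) < min δ δ' * x := hbadx
    have hmin : min δ δ' * x ≤ δ * x := by
      apply mul_le_mul_of_nonneg_right (min_le_left _ _) hxpos.le
    have hc2' : (({m : ℕ | (x ≤ (m : ℝ) ∧ (m : ℝ) ≤ (1 + ε₂) * x) ∧
        (1 - ε₂) * f n * f m ≤ f (n * m)} : Set ℕ).ncard : ℝ) ≤ (Bad.ncard : ℝ) := by
      exact_mod_cast hc2
    linarith
  have hexL : ∃ m : ℕ, ((x ≤ (m : ℝ) ∧ (m : ℝ) ≤ (1 + ε₂) * x) ∧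
      (1 - ε₂) * (1 / f n) * (1 / f m) ≤ 1 / f (n * m)) ∧ m ∉ S ∧ n * m ∉ S := by
    by_contra hcon
    push_neg at hcon
    have hsub : {m : ℕ | (x ≤ (m : ℝ) ∧ (m : ℝ) ≤ (1 + ε₂) * x) ∧
        (1 - ε₂) * (1 / f n) * (1 / f m) ≤ 1 / f (n * m)} ⊆ Bad := by
      intro m hm
      refine ⟨hm.1, ?_⟩
      by_cases hmS : m ∈ S
      · exact Or.inl hmS
      · exact Or.inr (hcon m hm hmS)
    have hc1 := hB x hxx₀'
    have hc2 : ({m : ℕ | (x ≤ (m : ℝ) ∧ (m : ℝ) ≤ (1 + ε₂) * x) ∧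
        (1 - ε₂) * (1 / f n) * (1 / f m) ≤ 1 / f (n * m)} : Set ℕ).ncard ≤ Bad.ncard :=
      Set.ncard_le_ncard hsub hBadFin
    have : (Bad.ncard : ℝ) < min δ δ' * x := hbadx
    have hmin : min δ δ' * x ≤ δ' * x := by
      apply mul_le_mul_of_nonneg_right (min_le_right _ _) hxpos.le
    have hc2' : (({m : ℕ | (x ≤ (m : ℝ) ∧ (m : ℝ) ≤ (1 + ε₂) * x) ∧
        (1 - ε₂) * (1 / f n) * (1 / f m) ≤ 1 / f (n * m)} : Set ℕ).ncard : ℝ)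
        ≤ (Bad.ncard : ℝ) := by exact_mod_cast hc2
    linarith
  -- common facts about a good m
  have facts : ∀ m : ℕ, x ≤ (m : ℝ) → (m : ℝ) ≤ (1 + ε₂) * x → m ∉ S → n * m ∉ S →
      ((1 - ε₂) * g m < f m ∧ f m < (1 + ε₂) * g m) ∧
      ((1 - ε₂) * g ((n:ℝ) * (m:ℝ)) < f (n * m) ∧ f (n * m) < (1 + ε₂) * g ((n:ℝ) * (m:ℝ))) ∧
      ((1 - ε₁) * g x < g m ∧ g m < (1 + ε₁) * g x) ∧
      ((1 - ε₁) * g ((n:ℝ) * x) < g ((n:ℝ) * (m:ℝ)) ∧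
        g ((n:ℝ) * (m:ℝ)) < (1 + ε₁) * g ((n:ℝ) * x)) := by
    intro m hm1 hm2 hmS hnmS
    have hmpos : (0:ℝ) < (m:ℝ) := by linarith
    have hgm : 0 < g m := hgpos _ hmpos
    have hnmpos : (0:ℝ) < (n:ℝ) * (m:ℝ) := mul_pos (by linarith) hmpos
    have hgnm : 0 < g ((n:ℝ) * (m:ℝ)) := hgpos _ hnmpos
    have habs1 : |f m - g m| < ε₂ * g m := by
      rw [hSdef] at hmS; simp only [Set.mem_setOf_eq, not_le] at hmS; exact hmS
    have habs2 : |f (n * m) - g ((n:ℝ) * (m:ℝ))| < ε₂ * g ((n:ℝ) * (m:ℝ)) := by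
      rw [hSdef] at hnmS; simp only [Set.mem_setOf_eq, not_le] at hnmS
      push_cast at hnmS; exact hnmS
    rw [abs_lt] at habs1 habs2
    have hratio : |(m:ℝ) / x - 1| < δL := by
      rw [abs_lt]
      constructor
      · have : (1:ℝ) ≤ (m:ℝ)/x := (one_le_div hxpos).mpr hm1
        linarith
      · have : (m:ℝ)/x ≤ 1 + ε₂ := (div_le_iff₀ hxpos).mpr (by linarith [hm2])
        linarith
    have hr1 := hLUC (m:ℝ) x hmpos hxpos hratio
    have hratio2 : |((n:ℝ) * (m:ℝ)) / ((n:ℝ) * x) - 1| < δL := by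
      rw [mul_div_mul_left _ _ (show (n:ℝ) ≠ 0 by positivity)]
      exact hratio
    have hr2 := hLUC ((n:ℝ)*(m:ℝ)) ((n:ℝ)*x) hnmpos hnx hratio2
    rw [abs_lt] at hr1 hr2
    obtain ⟨hr1a, hr1b⟩ := hr1
    obtain ⟨hr2a, hr2b⟩ := hr2
    constructor
    · constructor <;> linarith [habs1.1, habs1.2]
    constructor
    · constructor <;> linarith [habs2.1, habs2.2]
    constructor
    · constructor
      · have := (lt_div_iff₀ hgx).mp (by linarith [hr1a] : 1 - ε₁ < g m / g x)
        linarith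
      · have := (div_lt_iff₀ hgx).mp (by linarith [hr1b] : g m / g x < 1 + ε₁)
        linarith
    · constructor
      · have := (lt_div_iff₀ hgnx).mp (by linarith [hr2a] :
          1 - ε₁ < g ((n:ℝ)*(m:ℝ)) / g ((n:ℝ)*x))
        linarith
      · have := (div_lt_iff₀ hgnx).mp (by linarith [hr2b] :
          g ((n:ℝ)*(m:ℝ)) / g ((n:ℝ)*x) < 1 + ε₁)
        linarith
  constructor
  · -- lower bound, uses hexL
    obtain ⟨m, ⟨⟨hm1, hm2⟩, hm3⟩, hmS, hnmS⟩ := hexL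
    obtain ⟨⟨hfm1, hfm2⟩, ⟨hfnm1, hfnm2⟩, ⟨hgm1, hgm2⟩, ⟨hgnm1, hgnm2⟩⟩ :=
      facts m hm1 hm2 hmS hnmS
    have hmpos : (0:ℝ) < (m:ℝ) := by linarith
    have hgm : 0 < g m := hgpos _ hmpos
    have hnmpos : (0:ℝ) < (n:ℝ) * (m:ℝ) := mul_pos (by linarith) hmpos
    have hgnm : 0 < g ((n:ℝ) * (m:ℝ)) := hgpos _ hnmpos
    have hfnmpos := hfpos (n*m)
    have hfnpos := hfpos n
    have hfmpos := hfpos m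
    -- convert hm3
    have h' : (1 - ε₂) * f (n * m) ≤ f n * f m := by
      have heq : (1 - ε₂) * (1 / f n) * (1 / f m) = (1 - ε₂) / (f n * f m) := by ring
      rw [heq] at hm3
      rw [div_le_div_iff₀ (by positivity) hfnmpos] at hm3
      nlinarith [hm3]
    have hc1 : (0:ℝ) ≤ 1 - ε₂ := by linarith
    have hc2 : (0:ℝ) ≤ 1 + ε₂ := by linarith
    have chain : (1-ε₂)^2*(1-ε₁)*(g ((n:ℝ)*x)) ≤ (1+ε₂)*(1+ε₁)*(f n * g x) := by
      have s1 : (1-ε₂)^2*((1-ε₁)*(g ((n:ℝ)*x))) ≤ (1-ε₂)^2 * g ((n:ℝ)*(m:ℝ)) :=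
        mul_le_mul_of_nonneg_left hgnm1.le (sq_nonneg _)
      have s2 : (1-ε₂)*((1-ε₂) * g ((n:ℝ)*(m:ℝ))) ≤ (1-ε₂) * f (n*m) :=
        mul_le_mul_of_nonneg_left hfnm1.le hc1
      have s3 : f n * f m ≤ f n * ((1+ε₂) * g m) :=
        mul_le_mul_of_nonneg_left hfm2.le hfnpos.le
      have s4 : f n * ((1+ε₂) * g m) ≤ f n * ((1+ε₂) * ((1+ε₁) * g x)) :=
        mul_le_mul_of_nonneg_left
          (mul_le_mul_of_nonneg_left hgm2.le hc2) hfnpos.le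
      nlinarith [s1, s2, s3, s4, h']
    exact arith_lo ε₁ ε₂ ε (f n * g x) (g ((n:ℝ)*x)) hε₂ hε₂ε₁ hε₁1 hε₁ε
      (by positivity) hgnx chain
  · -- upper bound, uses hexU
    obtain ⟨m, ⟨⟨hm1, hm2⟩, hm3⟩, hmS, hnmS⟩ := hexU
    obtain ⟨⟨hfm1, hfm2⟩, ⟨hfnm1, hfnm2⟩, ⟨hgm1, hgm2⟩, ⟨hgnm1, hgnm2⟩⟩ :=
      facts m hm1 hm2 hmS hnmS
    have hmpos : (0:ℝ) < (m:ℝ) := by linarith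
    have hgm : 0 < g m := hgpos _ hmpos
    have hnmpos : (0:ℝ) < (n:ℝ) * (m:ℝ) := mul_pos (by linarith) hmpos
    have hgnm : 0 < g ((n:ℝ) * (m:ℝ)) := hgpos _ hnmpos
    have hfnpos := hfpos n
    have hfmpos := hfpos m
    have hc1 : (0:ℝ) ≤ 1 - ε₂ := by linarith
    have hc2 : (0:ℝ) ≤ 1 + ε₂ := by linarith
    have chain : (1-ε₂)^2*(1-ε₁)*(f n * g x) ≤ (1+ε₂)*(1+ε₁)*(g ((n:ℝ)*x)) := by
      have s1 : ((1-ε₂)*(1-ε₂)*(f n))*((1-ε₁)* g x) ≤ ((1-ε₂)*(1-ε₂)*(f n))* g m :=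
        mul_le_mul_of_nonneg_left hgm1.le
          (mul_nonneg (mul_nonneg hc1 hc1) hfnpos.le)
      have s2 : ((1-ε₂)*(f n))*((1-ε₂)* g m) ≤ ((1-ε₂)*(f n))* f m :=
        mul_le_mul_of_nonneg_left hfm1.le (mul_nonneg hc1 hfnpos.le)
      have s4 : f (n*m) ≤ (1+ε₂) * g ((n:ℝ)*(m:ℝ)) := hfnm2.le
      have s5 : (1+ε₂) * g ((n:ℝ)*(m:ℝ)) ≤ (1+ε₂) * ((1+ε₁) * g ((n:ℝ)*x)) :=
        mul_le_mul_of_nonneg_left hgnm2.le hc2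
      nlinarith [s1, s2, s4, s5, hm3]
    exact arith_up ε₁ ε₂ ε (f n * g x) (g ((n:ℝ)*x)) hε₂ hε₂ε₁ hε₁1 hε₁ε
      (by positivity) hgnx chain

lemma eq_zero_of_abs_mul_nat (X A : ℝ) (K : ℕ) (h : ∀ k : ℕ, K ≤ k → |X| * k ≤ A) :
    X = 0 := by
  by_contra hX
  have hX' : 0 < |X| := abs_pos.mpr hX
  obtain ⟨k, hk⟩ := exists_nat_gt (max (K:ℝ) (A / |X|))
  have hkK : K ≤ k := by
    have : (K:ℝ) ≤ max (K:ℝ) (A/|X|) := le_max_left _ _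
    have : (K:ℝ) < k := by linarith
    exact_mod_cast this.le
  have h1 := h k hkK
  have h2 : A / |X| < k := lt_of_le_of_lt (le_max_right _ _) hk
  have h3 : A < |X| * k := by
    rw [div_lt_iff₀ hX'] at h2; linarith
  linarith

lemma eq_zero_of_small (a c : ℝ) (hc : 0 ≤ c)
    (h : ∀ ε : ℝ, 0 < ε → ε ≤ 1/2 → |a| ≤ c * ε) : a = 0 := by
  by_contra ha
  have ha' : 0 < |a| := abs_pos.mpr ha
  set ε := min (1/2 : ℝ) (|a| / (2 * (c + 1))) with hεdef
  have hεpos : 0 < ε := lt_min (by norm_num) (by positivity)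
  have hε2 : ε ≤ 1/2 := min_le_left _ _
  have h1 := h ε hεpos hε2
  have h2 : ε ≤ |a| / (2 * (c + 1)) := min_le_right _ _
  have h3 : c * ε ≤ c * (|a| / (2 * (c + 1))) := mul_le_mul_of_nonneg_left h2 hc
  have h4 : c * (|a| / (2 * (c + 1))) < |a| := by
    rw [mul_div_assoc'] at *
    rw [div_lt_iff₀ (by positivity)]
    nlinarith
  linarith

section main
variable (f : ℕ → ℝ) (g : ℝ → ℝ)

def KeyProp : Prop := ∀ n : ℕ, 0 < n → ∀ ε : ℝ, 0 < ε →
    ∀ᶠ x : ℝ in atTop,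
      (1 - ε) * g ((n:ℝ) * x) ≤ f n * g x ∧ f n * g x ≤ (1 + ε) * g ((n:ℝ) * x)

lemma mult_of_key (hfpos : ∀ n, 0 < f n) (hgpos : ∀ x : ℝ, 0 < x → 0 < g x)
    (hkey : KeyProp f g) (n k : ℕ) (hn : 0 < n) (hk : 0 < k) :
    f (n * k) = f n * f k := by
  have hfn := hfpos n
  have hfk := hfpos k
  have hQR : 0 < f n * f k := mul_pos hfn hfk
  have main : ∀ ε : ℝ, 0 < ε → ε ≤ 1/2 →
      |f (n * k) - f n * f k| ≤ (20 * (f n * f k)) * ε := by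
    intro ε hε hε2
    have hkR : (0:ℝ) < (k:ℝ) := by exact_mod_cast hk
    have hnR : (0:ℝ) < (n:ℝ) := by exact_mod_cast hn
    have tk : Tendsto (fun x : ℝ => (k:ℝ) * x) atTop atTop :=
      Tendsto.const_mul_atTop hkR tendsto_id
    have h1' := tk.eventually (hkey n hn ε hε)
    have h2' := hkey k hk ε hε
    have h3' := hkey (n * k) (Nat.mul_pos hn hk) ε hε
    obtain ⟨x, hx1, hx2, hx3, hxpos⟩ :=
      (h1'.and (h2'.and (h3'.and (eventually_gt_atTop (0:ℝ))))).exists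
    have harg : ((n * k : ℕ) : ℝ) * x = (n:ℝ) * ((k:ℝ) * x) := by push_cast; ring
    rw [harg] at hx3
    set P := f (n * k)
    set Q := f n
    set R := f k
    set a := g x with hadef
    set b := g ((k:ℝ) * x) with hbdef
    set c := g ((n:ℝ) * ((k:ℝ) * x)) with hcdef
    have hapos : 0 < a := hgpos x hxpos
    have hbpos : 0 < b := hgpos _ (by positivity)
    have hcpos : 0 < c := hgpos _ (by positivity)
    have hPpos : 0 < P := hfpos _
    obtain ⟨h1a, h1b⟩ := hx1
    obtain ⟨h2a, h2b⟩ := hx2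
    obtain ⟨h3a, h3b⟩ := hx3
    -- upper: (1-ε)^2 * P ≤ (1+ε) * (Q*R)
    have up : (1-ε)^2 * P ≤ (1+ε) * (Q * R) := by
      have u1 := mul_le_mul_of_nonneg_left h3b (sq_nonneg (1-ε))
      have u2 := mul_le_mul_of_nonneg_left h1a
        (show (0:ℝ) ≤ (1-ε)*(1+ε) by nlinarith)
      have u3 := mul_le_mul_of_nonneg_left h2a
        (show (0:ℝ) ≤ (1+ε)*Q by positivity)
      have t1 : ((1-ε)^2 * P) * a ≤ ((1+ε) * (Q * R)) * a := by linarith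
      exact le_of_mul_le_mul_right t1 hapos
    -- lower: (1-ε) * (Q*R) ≤ (1+ε)^2 * P
    have lo : (1-ε) * (Q * R) ≤ (1+ε)^2 * P := by
      have u1 := mul_le_mul_of_nonneg_left h3a (sq_nonneg (1+ε))
      have u2 := mul_le_mul_of_nonneg_left h1b
        (show (0:ℝ) ≤ (1-ε)*(1+ε) by nlinarith)
      have u3 := mul_le_mul_of_nonneg_left h2b
        (show (0:ℝ) ≤ (1-ε)*Q by nlinarith [hfn])
      have t1 : ((1-ε) * (Q * R)) * a ≤ ((1+ε)^2 * P) * a := by linarith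
      exact le_of_mul_le_mul_right t1 hapos
    have hP6 : P ≤ 6 * (Q * R) := by
      have hq : (0:ℝ) ≤ (1-ε)^2 - 1/4 := by nlinarith
      have hw := mul_nonneg hPpos.le hq
      have he2QR : ε * (Q * R) ≤ (1/2) * (Q * R) :=
        mul_le_mul_of_nonneg_right hε2 hQR.le
      linarith [up, hw, he2QR]
    have h6e : ε * P ≤ ε * (6 * (Q * R)) := mul_le_mul_of_nonneg_left hP6 hε.le
    have heP : ε * (ε * P) ≤ (1/2) * (ε * P) :=
      mul_le_mul_of_nonneg_right hε2 (by positivity)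
    rw [abs_le]
    constructor
    · linarith [lo, h6e, heP]
    · linarith [up, h6e, mul_nonneg (mul_nonneg hε.le hε.le) hPpos.le]
  have := eq_zero_of_small (f (n*k) - f n * f k) (20 * (f n * f k)) (by positivity) main
  linarith

lemma cont_of_key (hfpos : ∀ n, 0 < f n) (hgpos : ∀ x : ℝ, 0 < x → 0 < g x)
    (hgluc : ∀ ε : ℝ, 0 < ε → ∃ δ : ℝ, 0 < δ ∧ ∀ x y : ℝ, 0 < x → 0 < y →
      |x / y - 1| < δ → |g x / g y - 1| < ε)
    (hkey : KeyProp f g) :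
    ∃ δ : ℝ, 0 < δ ∧ ∀ n k : ℕ, 0 < n → 0 < k →
      |(n:ℝ) / (k:ℝ) - 1| < δ → f n ≤ 2 * f k := by
  obtain ⟨δ, hδ, hL⟩ := hgluc (1/10) (by norm_num)
  refine ⟨δ, hδ, fun n k hn hk hr => ?_⟩
  have hnR : (0:ℝ) < (n:ℝ) := by exact_mod_cast hn
  have hkR : (0:ℝ) < (k:ℝ) := by exact_mod_cast hk
  have h1' := hkey n hn (1/10) (by norm_num)
  have h2' := hkey k hk (1/10) (by norm_num)
  obtain ⟨x, ⟨h1a, h1b⟩, ⟨h2a, h2b⟩, hxpos⟩ :=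
    (h1'.and (h2'.and (eventually_gt_atTop (0:ℝ)))).exists
  have hgx : 0 < g x := hgpos x hxpos
  have hgnx : 0 < g ((n:ℝ)*x) := hgpos _ (by positivity)
  have hgkx : 0 < g ((k:ℝ)*x) := hgpos _ (by positivity)
  have hratio : |((n:ℝ)*x) / ((k:ℝ)*x) - 1| < δ := by
    rw [mul_div_mul_right _ _ (ne_of_gt hxpos)]
    exact hr
  have hg := hL ((n:ℝ)*x) ((k:ℝ)*x) (by positivity) (by positivity) hratio
  rw [abs_lt] at hg
  have hgle : g ((n:ℝ)*x) ≤ (11/10) * g ((k:ℝ)*x) := by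
    have := (div_lt_iff₀ hgkx).mp (by linarith [hg.2] :
      g ((n:ℝ)*x) / g ((k:ℝ)*x) < 11/10)
    linarith
  have chain : f n * g x ≤ 2 * (f k * g x) := by
    have c1 : f n * g x ≤ (11/10) * g ((n:ℝ)*x) := by
      have := h1b; norm_num at this ⊢; linarith
    have c2 : (9/10) * g ((k:ℝ)*x) ≤ f k * g x := by
      have := h2a; norm_num at this ⊢; linarith
    nlinarith [hgle, hgkx]
  have := le_of_mul_le_mul_right (by linarith [chain] :
    (f n) * g x ≤ (2 * f k) * g x) hgx
  linarith

lemma chain_pow (hfpos : ∀ n, 0 < f n) (δ : ℝ) (hδ : 0 < δ) (hδ1 : δ ≤ 1)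
    (H : ∀ a b : ℕ, 0 < a → 0 < b → |(a:ℝ)/(b:ℝ) - 1| < δ → f a ≤ 2 * f b) :
    ∀ j : ℕ, ∀ a b : ℕ, 0 < b → (4/δ : ℝ) ≤ (b:ℝ) → b ≤ a →
      (a:ℝ) ≤ (1+δ/2)^j * (b:ℝ) → f a ≤ 2^j * f b := by
  intro j
  induction j with
  | zero =>
    intro a b hb hbB hba hab
    have : (a:ℝ) ≤ (b:ℝ) := by simpa using hab
    have hab' : a = b := le_antisymm (by exact_mod_cast this) hba
    simp [hab']
  | succ j ih =>
    intro a b hb hbB hba hab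
    have hbR : (0:ℝ) < (b:ℝ) := by exact_mod_cast hb
    have hbδ : 4 ≤ (b:ℝ) * δ := by
      rw [div_le_iff₀ hδ] at hbB; linarith
    have hpowpos : (0:ℝ) < (1+δ/2)^j := pow_pos (by linarith) j
    by_cases hc : (a:ℝ) ≤ (1+δ/2)^j * (b:ℝ)
    · have := ih a b hb hbB hba hc
      have h2 : (2:ℝ)^j ≤ 2^(j+1) := by
        apply pow_le_pow_right₀ (by norm_num)
        omega
      nlinarith [hfpos b, this]
    · push_neg at hc
      set b' : ℕ := b + ⌈(b:ℝ)*δ/2⌉₊ with hb'def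
      have hceil1 : (b:ℝ)*δ/2 ≤ (⌈(b:ℝ)*δ/2⌉₊ : ℝ) := Nat.le_ceil _
      have hceil2 : ((⌈(b:ℝ)*δ/2⌉₊ : ℕ) : ℝ) < (b:ℝ)*δ/2 + 1 :=
        Nat.ceil_lt_add_one (by positivity)
      have hb'R : ((b':ℕ):ℝ) = (b:ℝ) + (⌈(b:ℝ)*δ/2⌉₊ : ℝ) := by
        rw [hb'def]; push_cast; ring
      have hb'lo : (1+δ/2) * (b:ℝ) ≤ (b':ℝ) := by rw [hb'R]; linarith
      have hb'hi : (b':ℝ) < (1+δ) * (b:ℝ) := by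
        rw [hb'R]
        have : (1:ℝ) ≤ (b:ℝ)*δ/4 := by linarith
        linarith
      have hb'pos : 0 < b' := by omega
      rcases lt_or_ge a b' with hcase | hcase
      · -- a < b', direct step from b
        have haR : (a:ℝ) < (1+δ) * (b:ℝ) := by
          have : (a:ℝ) < (b':ℝ) := by exact_mod_cast hcase
          linarith
        have hstep : |(a:ℝ)/(b:ℝ) - 1| < δ := by
          rw [abs_lt]
          constructor
          · have : (1:ℝ) ≤ (a:ℝ)/(b:ℝ) := by
              rw [le_div_iff₀ hbR]
              have : (b:ℝ) ≤ (a:ℝ) := by exact_mod_cast hba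
              linarith
            linarith
          · have : (a:ℝ)/(b:ℝ) < 1 + δ := by
              rw [div_lt_iff₀ hbR]; linarith
            linarith
        have := H a b (by omega) hb hstep
        have h2 : (2:ℝ) ≤ 2^(j+1) := by
          have : (2:ℝ)^1 ≤ 2^(j+1) := pow_le_pow_right₀ (by norm_num) (by omega)
          simpa using this
        nlinarith [hfpos b]
      · -- b' ≤ a, use IH with b'
        have hstep : |((b':ℕ):ℝ)/(b:ℝ) - 1| < δ := by
          rw [abs_lt]
          constructor
          · have : (1:ℝ) ≤ (b':ℝ)/(b:ℝ) := by
              rw [le_div_iff₀ hbR]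
              have : (b:ℝ) ≤ (b':ℝ) := by exact_mod_cast Nat.le_add_right b _
              linarith
            linarith
          · have : (b':ℝ)/(b:ℝ) < 1 + δ := by
              rw [div_lt_iff₀ hbR]; linarith
            linarith
        have hfb' : f b' ≤ 2 * f b := H b' b hb'pos hb hstep
        have hih := ih a b' hb'pos (by linarith) hcase (by
          have : (1+δ/2)^(j+1) * (b:ℝ) = (1+δ/2)^j * ((1+δ/2)*(b:ℝ)) := by ring
          rw [this] at hab
          calc (a:ℝ) ≤ (1+δ/2)^j * ((1+δ/2)*(b:ℝ)) := hab
            _ ≤ (1+δ/2)^j * (b':ℝ) :=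
              mul_le_mul_of_nonneg_left hb'lo hpowpos.le)
        have h2j : (0:ℝ) < (2:ℝ)^j := by positivity
        calc f a ≤ 2^j * f b' := hih
          _ ≤ 2^j * (2 * f b) := mul_le_mul_of_nonneg_left hfb' h2j.le
          _ = 2^(j+1) * f b := by ring

lemma chain_double (hfpos : ∀ n, 0 < f n) (δ : ℝ) (hδ : 0 < δ) (hδ1 : δ ≤ 1)
    (H : ∀ a b : ℕ, 0 < a → 0 < b → |(a:ℝ)/(b:ℝ) - 1| < δ → f a ≤ 2 * f b) :
    ∃ C : ℝ, 1 ≤ C ∧ ∀ a b : ℕ, 0 < b → (4/δ : ℝ) ≤ (b:ℝ) → b ≤ a →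
      (a:ℝ) ≤ 2 * (b:ℝ) → f a ≤ C * f b := by
  obtain ⟨j, hj⟩ := pow_unbounded_of_one_lt (2:ℝ) (by linarith : (1:ℝ) < 1 + δ/2)
  refine ⟨2^j, one_le_pow₀ (by norm_num : (1:ℝ) ≤ 2), fun a b hb hbB hba hab => ?_⟩
  apply chain_pow f hfpos δ hδ hδ1 H j a b hb hbB hba
  have hbR : (0:ℝ) ≤ (b:ℝ) := by positivity
  nlinarith [hj, hbR]

lemma final_of (hfpos : ∀ n, 0 < f n)
    (hmult : ∀ n k : ℕ, 0 < n → 0 < k → f (n * k) = f n * f k)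
    (hcont : ∃ δ : ℝ, 0 < δ ∧ ∀ n k : ℕ, 0 < n → 0 < k →
      |(n:ℝ) / (k:ℝ) - 1| < δ → f n ≤ 2 * f k) :
    ∃ c : ℝ, ∀ n : ℕ, 0 < n → f n = (n : ℝ) ^ c := by
  obtain ⟨δ₀, hδ₀, H₀⟩ := hcont
  set δ : ℝ := min δ₀ 1 with hδdef
  have hδ : 0 < δ := lt_min hδ₀ one_pos
  have hδ1 : δ ≤ 1 := min_le_right _ _
  have H : ∀ a b : ℕ, 0 < a → 0 < b → |(a:ℝ)/(b:ℝ) - 1| < δ → f a ≤ 2 * f b :=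
    fun a b ha hb hr => H₀ a b ha hb (lt_of_lt_of_le hr (min_le_left _ _))
  obtain ⟨C, hC1, hCh⟩ := chain_double f hfpos δ hδ hδ1 H
  have hCpos : (0:ℝ) < C := by linarith
  have f1 : f 1 = 1 := by
    have := hmult 1 1 one_pos one_pos
    have h1 := hfpos 1
    nlinarith
  have fpow : ∀ n : ℕ, 0 < n → ∀ k : ℕ, f (n ^ k) = (f n) ^ k := by
    intro n hn k
    induction k with
    | zero => simpa using f1
    | succ k ih =>
      have : n ^ (k+1) = n ^ k * n := by ring
      rw [this, hmult (n^k) n (Nat.pow_pos hn) hn, ih]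
      ring
  have log2pos : (0:ℝ) < Real.log 2 := Real.log_pos (by norm_num)
  obtain ⟨K, hK⟩ := pow_unbounded_of_one_lt (4/δ : ℝ) (by norm_num : (1:ℝ) < 2)
  set c : ℝ := Real.log (f 2) / Real.log 2 with hcdef
  have main : ∀ n : ℕ, 2 ≤ n →
      Real.log (f n) * Real.log 2 - Real.log (f 2) * Real.log n = 0 := by
    intro n hn2
    have hnpos : 0 < n := by omega
    have hnR : (2:ℝ) ≤ (n:ℝ) := by exact_mod_cast hn2
    have hnRpos : (0:ℝ) < (n:ℝ) := by linarith
    have hlogn : Real.log 2 ≤ Real.log n := Real.log_le_log (by norm_num) hnR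
    set F : ℝ := Real.log (f n)
    set F2 : ℝ := Real.log (f 2)
    set L2 : ℝ := Real.log 2
    set Ln : ℝ := Real.log n
    set LC : ℝ := Real.log C
    have hLC : 0 ≤ LC := Real.log_nonneg hC1
    apply eq_zero_of_abs_mul_nat _ ((2*LC + 2*|F2|)*L2) (K+1)
    intro k hKk
    have hkpos : 0 < k := by omega
    have hkR : (0:ℝ) < (k:ℝ) := by exact_mod_cast hkpos
    set l : ℕ := ⌊(k:ℝ) * Ln / L2⌋₊ with hldef
    have hargpos : (0:ℝ) ≤ (k:ℝ) * Ln / L2 := by positivity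
    have hfl1 : (l:ℝ) ≤ (k:ℝ) * Ln / L2 := Nat.floor_le hargpos
    have hfl2 : (k:ℝ) * Ln / L2 < (l:ℝ) + 1 := Nat.lt_floor_add_one _
    have hB1 : (l:ℝ) * L2 ≤ (k:ℝ) * Ln := by
      rw [le_div_iff₀ log2pos] at hfl1
      linarith [hfl1]
    have hB2 : (k:ℝ) * Ln < ((l:ℝ) + 1) * L2 := by
      rw [div_lt_iff₀ log2pos] at hfl2
      linarith
    -- l ≥ k
    have hlk : k ≤ l := by
      have h1 : (k:ℝ) * L2 ≤ (k:ℝ) * Ln :=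
        mul_le_mul_of_nonneg_left hlogn (by positivity)
      have h2 : (k:ℝ) < (l:ℝ) + 1 := by
        by_contra hcon
        push_neg at hcon
        have : ((l:ℝ)+1) * L2 ≤ (k:ℝ) * L2 :=
          mul_le_mul_of_nonneg_right hcon log2pos.le
        linarith
      have : (k:ℝ) ≤ (l:ℝ) := by
        have := h2
        exact_mod_cast Nat.lt_add_one_iff.mp (by exact_mod_cast h2)
      exact_mod_cast this
    -- real power comparisons
    have hp1 : (2:ℝ)^l ≤ (n:ℝ)^k := by
      rw [← Real.log_le_log_iff (by positivity) (by positivity),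
        Real.log_pow, Real.log_pow]
      exact hB1
    have hp2 : (n:ℝ)^k < (2:ℝ)^(l+1) := by
      rw [← Real.log_lt_log_iff (by positivity) (by positivity),
        Real.log_pow, Real.log_pow]
      push_cast
      exact hB2
    have hn1 : (2:ℕ)^l ≤ n^k := by
      have : ((2:ℕ)^l : ℝ) ≤ ((n^k : ℕ) : ℝ) := by push_cast; exact hp1
      exact_mod_cast this
    have hn2 : n^k < (2:ℕ)^(l+1) := by
      have : ((n^k : ℕ) : ℝ) < ((2^(l+1) : ℕ) : ℝ) := by push_cast; exact hp2
      exact_mod_cast this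
    -- b = 2^l is large enough
    have hbB : (4/δ : ℝ) ≤ ((2^l : ℕ) : ℝ) := by
      have h1 : (4/δ : ℝ) < 2^K := hK
      have h2 : (2:ℝ)^K ≤ 2^l := pow_le_pow_right₀ (by norm_num) (by omega)
      push_cast
      linarith
    have hbB' : (4/δ : ℝ) ≤ ((n^k : ℕ) : ℝ) := by
      have : ((2^l : ℕ) : ℝ) ≤ ((n^k : ℕ) : ℝ) := by exact_mod_cast hn1
      linarith
    have h2lpos : 0 < (2:ℕ)^l := Nat.pow_pos (by norm_num)
    have hnkpos : 0 < n^k := Nat.pow_pos hnpos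
    -- the two chain bounds
    have ch1 : f (n^k) ≤ C * f (2^l) := by
      apply hCh (n^k) (2^l) h2lpos hbB hn1
      have : ((n^k : ℕ) : ℝ) < ((2^(l+1) : ℕ) : ℝ) := by exact_mod_cast hn2
      push_cast at this ⊢
      rw [pow_succ] at this
      linarith
    have ch2 : f (2^(l+1)) ≤ C * f (n^k) := by
      apply hCh (2^(l+1)) (n^k) hnkpos hbB' (le_of_lt hn2)
      have : ((2^l : ℕ) : ℝ) ≤ ((n^k : ℕ) : ℝ) := by exact_mod_cast hn1
      push_cast at this ⊢
      rw [pow_succ]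
      linarith
    rw [fpow n hnpos k, fpow 2 (by norm_num) l] at ch1
    rw [fpow 2 (by norm_num) (l+1), fpow n hnpos k] at ch2
    -- take logs
    have hfn := hfpos n
    have hf2 := hfpos 2
    have E1 : (k:ℝ) * F ≤ LC + (l:ℝ) * F2 := by
      have hlog := Real.log_le_log (by positivity) ch1
      rw [Real.log_pow, Real.log_mul (ne_of_gt hCpos) (by positivity),
        Real.log_pow] at hlog
      exact hlog
    have E2 : ((l:ℝ) + 1) * F2 ≤ LC + (k:ℝ) * F := by
      have hlog := Real.log_le_log (by positivity) ch2
      rw [Real.log_pow, Real.log_mul (ne_of_gt hCpos) (by positivity),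
        Real.log_pow] at hlog
      push_cast at hlog
      linarith
    -- assemble
    have habs1 : |(k:ℝ)*F - (l:ℝ)*F2| ≤ LC + |F2| := by
      rw [abs_le]
      constructor
      · have := neg_abs_le F2
        nlinarith [E2]
      · have := abs_nonneg F2
        nlinarith [E1]
    have habs2 : |(k:ℝ)*Ln - (l:ℝ)*L2| ≤ L2 := by
      rw [abs_le]
      constructor <;> nlinarith [hB1, hB2, log2pos]
    have hXk : (F * L2 - F2 * Ln) * (k:ℝ) =
        ((k:ℝ)*F - (l:ℝ)*F2) * L2 - F2 * ((k:ℝ)*Ln - (l:ℝ)*L2) := by ring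
    have : |F * L2 - F2 * Ln| * (k:ℝ) = |(F * L2 - F2 * Ln) * (k:ℝ)| := by
      rw [abs_mul, abs_of_nonneg (by positivity : (0:ℝ) ≤ (k:ℝ))]
    rw [this, hXk]
    calc |((k:ℝ)*F - (l:ℝ)*F2) * L2 - F2 * ((k:ℝ)*Ln - (l:ℝ)*L2)|
        ≤ |((k:ℝ)*F - (l:ℝ)*F2) * L2| + |F2 * ((k:ℝ)*Ln - (l:ℝ)*L2)| :=
          abs_sub _ _
      _ = |(k:ℝ)*F - (l:ℝ)*F2| * L2 + |F2| * |(k:ℝ)*Ln - (l:ℝ)*L2| := by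
          rw [abs_mul, abs_mul, abs_of_nonneg log2pos.le]
      _ ≤ (LC + |F2|) * L2 + |F2| * L2 := by
          have t1 := mul_le_mul_of_nonneg_right habs1 log2pos.le
          have t2 := mul_le_mul_of_nonneg_left habs2 (abs_nonneg F2)
          linarith
      _ ≤ (2*LC + 2*|F2|)*L2 := by nlinarith [abs_nonneg F2, hLC, log2pos]
  -- conclude
  refine ⟨c, fun n hn => ?_⟩
  rcases eq_or_lt_of_le (show 1 ≤ n from hn) with h1 | h2
  · have : n = 1 := by omega
    subst this
    simp [f1, Real.one_rpow]
  · have hn2 : 2 ≤ n := h2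
    have hnRpos : (0:ℝ) < (n:ℝ) := by exact_mod_cast hn
    have hX := main n hn2
    have hlogfn : Real.log (f n) = Real.log n * c := by
      rw [hcdef]
      field_simp
      linarith [hX]
    have : f n = Real.exp (Real.log n * c) := by
      rw [← hlogfn, Real.exp_log (hfpos n)]
    rw [this, Real.rpow_def_of_pos hnRpos]

end main

/-- Corollary (log-uniformly continuous case): if `f : ℕ → (0,∞)` is such that both `f` and `1/f` are
weakly super-multiplicative, and `f` has a strictly positive, log-uniformly continuous normal order, then `f(n) = n ^ c` for some
constant `c` and all `n`. -/
theorem weakly_supermult_both_logUC_normal_order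
    (f : ℕ → ℝ) (g : ℝ → ℝ)
    (hfpos : ∀ n, 0 < f n)
    (hwsm : WeaklySuperMult f)
    (hwsm' : WeaklySuperMult (fun n => 1 / f n))
    (hgpos : ∀ x : ℝ, 0 < x → 0 < g x)
    (hgluc : LogUniformlyContinuous g)
    (hno : HasNormalOrder f g) :
    ∃ c : ℝ, ∀ n : ℕ, 0 < n → f n = (n : ℝ) ^ c := by
  have hkey : KeyProp f g := fun n hn ε hε =>
    key f g hfpos hwsm hwsm' hgpos hgluc hno n hn ε hε
  have hmult := mult_of_key f g hfpos hgpos hkey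
  have hcont := cont_of_key f g hfpos hgpos hgluc hkey
  exact final_of f hfpos hmult hcont
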